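/- Let ι be a finite index type and let S : ι → Set α be an injective family of sets that is laminar, i.e. for all i, j either S i ⊆ S j, or S j ⊆ S i, or S i ∩ S j = ∅. Then the containment order on the family can be realized by closed discs in the plane: there exist c : ι → ℝ² and r : ι → ℝ with r(i) > 0 for all i, such that for all i, j one has S i ⊆ S j if and only if the closed disc of center c(i) and radius r(i) is contained in the closed disc of center c(j) and radius r(j). -/

import Mathlib

open Set Metric

/-- Closed balls in a real normed space (with a designated unit vector) are
nested iff the distance of centers plus the small radius is at most the big
radius. -/
theorem closedBall_subset_closedBall_iff_aux {E : Type*} [NormedAddCommGroup E]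
    [NormedSpace ℝ E] (v : E) (hv : ‖v‖ = 1) (x y : E) {r R : ℝ} (hr : 0 ≤ r) :
    Metric.closedBall x r ⊆ Metric.closedBall y R ↔ dist x y + r ≤ R := by
  constructor
  · intro h
    by_cases hxy : x = y
    · subst hxy
      have hmem : x + r • v ∈ Metric.closedBall x r := by
        simp [Metric.mem_closedBall, dist_eq_norm, norm_smul, hv,
          abs_of_nonneg hr]
      have h2 := h hmem
      simp only [Metric.mem_closedBall, dist_eq_norm, add_sub_cancel_left,
        norm_smul, hv, mul_one, Real.norm_eq_abs, abs_of_nonneg hr] at h2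
      simpa using h2
    · set t := ‖x - y‖ with ht_def
      have ht : 0 < t := by
        rw [ht_def]
        exact norm_pos_iff.2 (sub_ne_zero.2 hxy)
      set u : E := t⁻¹ • (x - y) with hu_def
      have hu : ‖u‖ = 1 := by
        rw [hu_def, norm_smul, norm_inv, norm_norm, ← ht_def,
          inv_mul_cancel₀ ht.ne']
      have hmem : x + r • u ∈ Metric.closedBall x r := by
        simp [Metric.mem_closedBall, dist_eq_norm, norm_smul, hu,
          abs_of_nonneg hr]
      have h2 := h hmem
      have hcalc : x + r • u - y = (1 + r * t⁻¹) • (x - y) := by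
        rw [hu_def, smul_smul, add_smul, one_smul]
        abel
      rw [Metric.mem_closedBall, dist_eq_norm, hcalc, norm_smul,
        Real.norm_eq_abs, ← ht_def] at h2
      have habs : |1 + r * t⁻¹| = 1 + r * t⁻¹ := by
        have : 0 ≤ r * t⁻¹ := mul_nonneg hr (inv_nonneg.2 ht.le)
        exact abs_of_nonneg (by linarith)
      rw [habs] at h2
      have hexp : (1 + r * t⁻¹) * t = t + r := by
        field_simp
      rw [hexp] at h2
      rw [dist_eq_norm, ← ht_def]
      linarith
  · intro h z hz
    have := Metric.closedBall_subset_closedBall' (x := x) (y := y)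
      (ε₁ := r) (ε₂ := R) (by linarith [dist_comm x y])
    exact this hz

/-- Interval realizer for a laminar family of nonempty sets, with the extra
invariant that every interval strictly contains `[0, 1]`. -/
theorem laminar_interval_aux : ∀ (n : ℕ) {ι α : Type*} [Fintype ι],
    Fintype.card ι = n → ∀ (S : ι → Set α), Function.Injective S →
    (∀ i j, S i ⊆ S j ∨ S j ⊆ S i ∨ S i ∩ S j = ∅) →
    (∀ i, (S i).Nonempty) →
    ∃ a b : ι → ℝ, (∀ i, a i < 0) ∧ (∀ i, 1 < b i) ∧
      ∀ i j, S i ⊆ S j ↔ (a j ≤ a i ∧ b i ≤ b j) := by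
  intro n
  induction n using Nat.strong_induction_on with
  | _ n IH =>
    intro ι α _ hcard S hinj hlam hne
    classical
    cases isEmpty_or_nonempty ι with
    | inl h =>
      exact ⟨fun _ => -1, fun _ => 2, fun i => isEmptyElim i,
        fun i => isEmptyElim i, fun i => isEmptyElim i⟩
    | inr hne_ι =>
      by_cases htop : ∃ t, ∀ i, S i ⊆ S t
      · -- there is a top element: put its interval around everything
        obtain ⟨t, ht⟩ := htop
        have hlt : Fintype.card {i // i ≠ t} < n := by
          rw [← hcard]
          exact Fintype.card_subtype_lt (x := t) (by simp)
        obtain ⟨a', b', ha', hb', hab⟩ := IH _ hlt rfl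
          (fun k : {i // i ≠ t} => S k.1)
          (fun k l hkl => Subtype.ext (hinj hkl))
          (fun k l => hlam k.1 l.1) (fun k => hne k.1)
        obtain ⟨A, hA⟩ := Finite.exists_le (fun k : {i // i ≠ t} => -(a' k))
        obtain ⟨B, hB⟩ := Finite.exists_le b'
        have key1 : ∀ (i : ι) (hi : i ≠ t), min (-A) 0 - 1 < a' ⟨i, hi⟩ := by
          intro i hi
          have h1 := hA ⟨i, hi⟩
          have h2 := min_le_left (-A) 0
          linarith
        have key2 : ∀ (i : ι) (hi : i ≠ t), b' ⟨i, hi⟩ < max B 1 + 1 := by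
          intro i hi
          have h1 := hB ⟨i, hi⟩
          have h2 := le_max_left B 1
          linarith
        refine ⟨fun i => if h : i = t then min (-A) 0 - 1 else a' ⟨i, h⟩,
                fun i => if h : i = t then max B 1 + 1 else b' ⟨i, h⟩,
                ?_, ?_, ?_⟩
        · intro i
          by_cases hi : i = t
          · simp only [dif_pos hi]
            have := min_le_right (-A) 0
            linarith
          · simp only [dif_neg hi]; exact ha' ⟨i, hi⟩
        · intro i
          by_cases hi : i = t
          · simp only [dif_pos hi]
            have := le_max_right B 1
            linarith
          · simp only [dif_neg hi]; exact hb' ⟨i, hi⟩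
        · intro i j
          by_cases hi : i = t
          · by_cases hj : j = t
            · simp only [dif_pos hi, dif_pos hj]
              exact iff_of_true (by rw [hi, hj]) ⟨le_rfl, le_rfl⟩
            · simp only [dif_pos hi, dif_neg hj]
              subst hi
              constructor
              · intro hsub
                exact absurd (hinj (subset_antisymm hsub (ht j))).symm hj
              · rintro ⟨h1, h2⟩
                exact absurd h1 (not_le.2 (key1 j hj))
          · by_cases hj : j = t
            · simp only [dif_neg hi, dif_pos hj]
              refine iff_of_true (by rw [hj]; exact ht i) ⟨(key1 i hi).le, (key2 i hi).le⟩
            · simp only [dif_neg hi, dif_neg hj]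
              exact hab ⟨i, hi⟩ ⟨j, hj⟩
      · -- no top element: split at a maximal element into two incomparable parts
        obtain ⟨m, -, hmax⟩ := Set.Finite.exists_maximalFor S Set.univ
          Set.finite_univ Set.univ_nonempty
        push_neg at htop
        obtain ⟨w, hw⟩ := htop m
        haveI hLne : Nonempty {i // S i ⊆ S m} := ⟨⟨m, subset_rfl⟩⟩
        haveI hOne : Nonempty {i // ¬ S i ⊆ S m} := ⟨⟨w, hw⟩⟩
        have hLlt : Fintype.card {i // S i ⊆ S m} < n := by
          rw [← hcard]
          exact Fintype.card_subtype_lt (x := w) hw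
        have hOlt : Fintype.card {i // ¬ S i ⊆ S m} < n := by
          rw [← hcard]
          exact Fintype.card_subtype_lt (x := m)
            (not_not_intro (subset_refl (S m)))
        obtain ⟨aL, bL, haL, hbL, hLiff⟩ := IH _ hLlt rfl
          (fun k : {i // S i ⊆ S m} => S k.1)
          (fun k l hkl => Subtype.ext (hinj hkl))
          (fun k l => hlam k.1 l.1) (fun k => hne k.1)
        obtain ⟨aO, bO, haO, hbO, hOiff⟩ := IH _ hOlt rfl
          (fun k : {i // ¬ S i ⊆ S m} => S k.1)
          (fun k l hkl => Subtype.ext (hinj hkl))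
          (fun k l => hlam k.1 l.1) (fun k => hne k.1)
        obtain ⟨i₀, hi₀⟩ := Finite.exists_max aL
        obtain ⟨j₀, hj₀⟩ := Finite.exists_min aO
        obtain ⟨i₁, hi₁⟩ := Finite.exists_max bL
        obtain ⟨j₁, hj₁⟩ := Finite.exists_min bO
        set c : ℝ := aL i₀ / (2 * aO j₀) with hc_def
        have hc : 0 < c := by
          rw [hc_def, div_pos_iff]
          right
          exact ⟨haL i₀, by linarith [haO j₀]⟩
        have hcj₀ : c * aO j₀ = aL i₀ / 2 := by
          rw [hc_def]
          have h0 : aO j₀ ≠ 0 := ne_of_lt (haO j₀)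
          field_simp
        have key1 : ∀ (i : {i // S i ⊆ S m}) (j : {i // ¬ S i ⊆ S m}),
            aL i < c * aO j := by
          intro i j
          calc aL i ≤ aL i₀ := hi₀ i
            _ < aL i₀ / 2 := by linarith [haL i₀]
            _ = c * aO j₀ := hcj₀.symm
            _ ≤ c * aO j := mul_le_mul_of_nonneg_left (hj₀ j) hc.le
        have hcneg : ∀ j : {i // ¬ S i ⊆ S m}, c * aO j < 0 :=
          fun j => mul_neg_of_pos_of_neg hc (haO j)
        set d : ℝ := (2 * bL i₁) / bO j₁ with hd_def
        have hd : 0 < d := by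
          rw [hd_def]
          exact div_pos (by linarith [hbL i₁]) (by linarith [hbO j₁])
        have hdj₁ : d * bO j₁ = 2 * bL i₁ := by
          rw [hd_def]
          exact div_mul_cancel₀ _ (by linarith [hbO j₁])
        have key2 : ∀ (j : {i // S i ⊆ S m}) (i : {i // ¬ S i ⊆ S m}),
            bL j < d * bO i := by
          intro j i
          calc bL j ≤ bL i₁ := hi₁ j
            _ < 2 * bL i₁ := by linarith [hbL i₁]
            _ = d * bO j₁ := hdj₁.symm
            _ ≤ d * bO i := mul_le_mul_of_nonneg_left (hj₁ i) hd.le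
        have hd1 : ∀ i : {i // ¬ S i ⊆ S m}, 1 < d * bO i := by
          intro i
          have h1 := hbL i₁
          have h2 : d * bO j₁ ≤ d * bO i := mul_le_mul_of_nonneg_left (hj₁ i) hd.le
          linarith [hdj₁]
        -- cross–comparability facts
        have hdisj : ∀ j : ι, ¬ S j ⊆ S m → S m ∩ S j = ∅ := by
          intro j hj
          rcases hlam m j with h | h | h
          · exact absurd (hmax trivial h) hj
          · exact absurd h hj
          · exact h
        have hLO : ∀ i j : ι, S i ⊆ S m → ¬ S j ⊆ S m → ¬ S i ⊆ S j := by
          intro i j hi hj hij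
          obtain ⟨x, hx⟩ := hne i
          have hmem : x ∈ S m ∩ S j := ⟨hi hx, hij hx⟩
          rw [hdisj j hj] at hmem
          exact hmem
        have hOL : ∀ i j : ι, ¬ S i ⊆ S m → S j ⊆ S m → ¬ S i ⊆ S j :=
          fun i j hi hj hij => hi (hij.trans hj)
        refine ⟨fun i => if h : S i ⊆ S m then aL ⟨i, h⟩ else c * aO ⟨i, h⟩,
                fun i => if h : S i ⊆ S m then bL ⟨i, h⟩ else d * bO ⟨i, h⟩,
                ?_, ?_, ?_⟩
        · intro i
          by_cases hi : S i ⊆ S m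
          · simp only [dif_pos hi]; exact haL ⟨i, hi⟩
          · simp only [dif_neg hi]; exact hcneg ⟨i, hi⟩
        · intro i
          by_cases hi : S i ⊆ S m
          · simp only [dif_pos hi]; exact hbL ⟨i, hi⟩
          · simp only [dif_neg hi]; exact hd1 ⟨i, hi⟩
        · intro i j
          by_cases hi : S i ⊆ S m
          · by_cases hj : S j ⊆ S m
            · simp only [dif_pos hi, dif_pos hj]
              exact hLiff ⟨i, hi⟩ ⟨j, hj⟩
            · simp only [dif_pos hi, dif_neg hj]
              refine iff_of_false (hLO i j hi hj) ?_
              rintro ⟨h1, h2⟩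
              exact absurd h1 (not_le.2 (key1 ⟨i, hi⟩ ⟨j, hj⟩))
          · by_cases hj : S j ⊆ S m
            · simp only [dif_neg hi, dif_pos hj]
              refine iff_of_false (hOL i j hi hj) ?_
              rintro ⟨h1, h2⟩
              exact absurd h2 (not_le.2 (key2 ⟨j, hj⟩ ⟨i, hi⟩))
            · simp only [dif_neg hi, dif_neg hj]
              rw [mul_le_mul_iff_right₀ hc, mul_le_mul_iff_right₀ hd]
              exact hOiff ⟨i, hi⟩ ⟨j, hj⟩

/-- Interval realizer for a general finite injective laminar family. -/
theorem laminar_interval {ι α : Type*} [Fintype ι] (S : ι → Set α)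
    (hinj : Function.Injective S)
    (hlam : ∀ i j, S i ⊆ S j ∨ S j ⊆ S i ∨ S i ∩ S j = ∅) :
    ∃ a b : ι → ℝ, (∀ i, a i < b i) ∧
      ∀ i j, S i ⊆ S j ↔ (a j ≤ a i ∧ b i ≤ b j) := by
  classical
  by_cases hemp : ∃ e, S e = ∅
  · obtain ⟨e, he⟩ := hemp
    have hne : ∀ k : {i // i ≠ e}, (S k.1).Nonempty := by
      intro k
      rw [Set.nonempty_iff_ne_empty]
      intro h
      exact k.2 (hinj (h.trans he.symm))
    obtain ⟨a', b', ha', hb', hab⟩ := laminar_interval_aux _ rfl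
      (fun k : {i // i ≠ e} => S k.1)
      (fun k l hkl => Subtype.ext (hinj hkl))
      (fun k l => hlam k.1 l.1) hne
    refine ⟨fun i => if h : i = e then 0 else a' ⟨i, h⟩,
            fun i => if h : i = e then 1 else b' ⟨i, h⟩, ?_, ?_⟩
    · intro i
      by_cases hi : i = e
      · simp only [dif_pos hi]; norm_num
      · simp only [dif_neg hi]
        have := ha' ⟨i, hi⟩
        have := hb' ⟨i, hi⟩
        linarith
    · intro i j
      by_cases hi : i = e
      · by_cases hj : j = e
        · simp only [dif_pos hi, dif_pos hj]
          exact iff_of_true (by rw [hi, hj]) ⟨le_rfl, le_rfl⟩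
        · simp only [dif_pos hi, dif_neg hj]
          refine iff_of_true (by rw [hi, he]; exact Set.empty_subset _) ?_
          exact ⟨(ha' ⟨j, hj⟩).le, (hb' ⟨j, hj⟩).le⟩
      · by_cases hj : j = e
        · simp only [dif_neg hi, dif_pos hj]
          refine iff_of_false ?_ ?_
          · intro hsub
            rw [hj, he, Set.subset_empty_iff] at hsub
            exact (hne ⟨i, hi⟩).ne_empty hsub
          · rintro ⟨h1, h2⟩
            exact absurd h1 (not_le.2 (ha' ⟨i, hi⟩))
        · simp only [dif_neg hi, dif_neg hj]
          exact hab ⟨i, hi⟩ ⟨j, hj⟩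
  · push_neg at hemp
    obtain ⟨a, b, ha, hb, hab⟩ := laminar_interval_aux _ rfl S hinj hlam
      (fun i => hemp i)
    exact ⟨a, b, fun i => by linarith [ha i, hb i], hab⟩

/-- The containment order of a finite injective laminar family of sets (any two
members are nested or disjoint) can be realized by closed discs in the plane:
`S i ⊆ S j` holds exactly when the disc assigned to `i` is contained in the
disc assigned to `j`. -/
theorem laminar_family_circle_containment
    {ι α : Type*} [Fintype ι] (S : ι → Set α)
    (hinj : Function.Injective S)
    (hlam : ∀ i j, S i ⊆ S j ∨ S j ⊆ S i ∨ S i ∩ S j = ∅) :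
    ∃ (c : ι → EuclideanSpace ℝ (Fin 2)) (r : ι → ℝ),
      (∀ i, 0 < r i) ∧
      ∀ i j, S i ⊆ S j ↔ Metric.closedBall (c i) (r i) ⊆ Metric.closedBall (c j) (r j) := by
  classical
  obtain ⟨a, b, hab, hiff⟩ := laminar_interval S hinj hlam
  set v : EuclideanSpace ℝ (Fin 2) := EuclideanSpace.single 0 1 with hv_def
  have hv : ‖v‖ = 1 := by
    rw [hv_def, EuclideanSpace.norm_single]
    norm_num
  refine ⟨fun i => ((a i + b i) / 2) • v, fun i => (b i - a i) / 2,
    fun i => by linarith [hab i], fun i j => ?_⟩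
  have hr : (0 : ℝ) ≤ (b i - a i) / 2 := by linarith [hab i]
  rw [hiff i j, closedBall_subset_closedBall_iff_aux v hv _ _ hr]
  have hdist : dist (((a i + b i) / 2) • v) (((a j + b j) / 2) • v)
      = |(a i + b i) / 2 - (a j + b j) / 2| := by
    rw [dist_eq_norm, ← sub_smul, norm_smul, hv, mul_one, Real.norm_eq_abs]
  rw [hdist]
  constructor
  · rintro ⟨h1, h2⟩
    have h' : |(a i + b i) / 2 - (a j + b j) / 2|
        ≤ (b j - a j) / 2 - (b i - a i) / 2 :=
      abs_sub_le_iff.mpr ⟨by linarith, by linarith⟩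
    show |(a i + b i) / 2 - (a j + b j) / 2| + (b i - a i) / 2 ≤ (b j - a j) / 2
    linarith
  · intro h
    have h0 : |(a i + b i) / 2 - (a j + b j) / 2| + (b i - a i) / 2
        ≤ (b j - a j) / 2 := h
    have h' : |(a i + b i) / 2 - (a j + b j) / 2|
        ≤ (b j - a j) / 2 - (b i - a i) / 2 := by linarith
    obtain ⟨h1, h2⟩ := abs_sub_le_iff.mp h'
    exact ⟨by linarith, by linarith⟩
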